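/- Define a_2 : ℕ → ℕ by the recursion of Theorem 1.1 (with a(n) = 2^{Σ_{k ∈ bin(n)} k}): a_2(0) = a_2(1) = 0 and for n = 2^R + m, m < 2^R: a_2(n) = 2^R·a_2(m) + binom(2^{R-1},2)·a(m) if m < 2^{R-1}, else a_2(n) = 2^R·a_2(m) + (binom(2^{R-1},3) + 2^{R-1})·a(m)/2^{R-1}. Then for every n ≥ 1, a_2(n) admits the closed form a_2(n) = a(n) · Σ_{k ∈ bin'(n)} (2^{b(k)} + 2)(2^{k-1} - 1)/2^{k+1+b(k)}, where bin'(n) = bin(n)\{0} and b(k) ∈ {0,1} is the (k-1)-st binary digit of n; equivalently a_2(n) = Σ_{k ∈ bin'(n)} T_{k-1}(b_{k-1}+2)/(2^k · T_{k-1}(b_{k-1})) · a(n) with T as in Lemma 3.2. -/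

import Mathlib

/-- The set of positions of 1s in the binary expansion of `n`. -/
def binSet (n : ℕ) : Finset ℕ := (Finset.range (n + 1)).filter (fun i => n.testBit i)

/-- `a(n) = 2^{Σ_{k ∈ bin(n)} k}`. -/
def aOdd (n : ℕ) : ℕ := 2 ^ (∑ k ∈ binSet n, k)

/-- `T k w` counts `2^k`-tuples of 2-cores of total size `w`, for `w ≤ 3`
(Lemma 3.2): `T k 0 = 1`, `T k 1 = 2^k`, `T k 2 = C(2^k,2)`,
`T k 3 = C(2^k,3) + 2^k`. -/
def T (k w : ℕ) : ℕ :=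
  if w = 0 then 1
  else if w = 1 then 2 ^ k
  else if w = 2 then Nat.choose (2 ^ k) 2
  else if w = 3 then Nat.choose (2 ^ k) 3 + 2 ^ k
  else 0

/-- The `i`-th binary digit of `n`, as `0` or `1`. -/
def bit (n i : ℕ) : ℕ := if n.testBit i then 1 else 0

lemma mem_binSet {n i : ℕ} : i ∈ binSet n ↔ n.testBit i = true := by
  simp only [binSet, Finset.mem_filter, Finset.mem_range]
  constructor
  · exact fun h => h.2
  · intro h
    refine ⟨?_, h⟩
    have := Nat.ge_two_pow_of_testBit h
    have := Nat.lt_two_pow_self (n := i)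
    omega

lemma binSet_zero : binSet 0 = ∅ := by
  ext i; simp [mem_binSet]

lemma aOdd_zero : aOdd 0 = 1 := by simp [aOdd, binSet_zero]

lemma testBit_of_le_of_lt {m j : ℕ} (h1 : 2 ^ j ≤ m) (h2 : m < 2 ^ (j + 1)) :
    m.testBit j = true := by
  rw [Nat.testBit_eq_decide_div_mod_eq]
  have : m / 2 ^ j = 1 := by
    rw [pow_succ] at h2
    have h0 : 0 < 2 ^ j := Nat.pow_pos (by norm_num)
    have := Nat.div_add_mod m (2 ^ j)
    have hlt := Nat.mod_lt m h0
    rcases Nat.lt_or_ge (m / 2 ^ j) 2 with hq | hq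
    · interval_cases h : m / 2 ^ j <;> omega
    · exfalso
      have : 2 * 2 ^ j ≤ m / 2 ^ j * 2 ^ j := by nlinarith
      nlinarith [Nat.div_mul_le_self m (2 ^ j)]
  simp [this]

lemma binSet_add {R m : ℕ} (h : m < 2 ^ R) :
    binSet (2 ^ R + m) = insert R (binSet m) := by
  ext i
  simp only [mem_binSet, Finset.mem_insert]
  rcases lt_trichotomy i R with hi | rfl | hi
  · rw [Nat.testBit_two_pow_add_gt hi]
    constructor
    · exact fun h => Or.inr h
    · rintro (rfl | h); · omega
      exact h
  · rw [Nat.testBit_two_pow_add_eq, Nat.testBit_lt_two_pow h]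
    simp
  · have hn : 2 ^ R + m < 2 ^ i := by
      calc 2 ^ R + m < 2 ^ R + 2 ^ R := by omega
      _ = 2 ^ (R+1) := by ring
      _ ≤ 2 ^ i := Nat.pow_le_pow_right (by norm_num) hi
    rw [Nat.testBit_lt_two_pow hn]
    have : m.testBit i = false := Nat.testBit_lt_two_pow (by
      calc m < 2 ^ R := h
      _ ≤ 2 ^ i := Nat.pow_le_pow_right (by norm_num) hi.le)
    simp [this]; omega

lemma not_mem_binSet_of_lt {R m : ℕ} (h : m < 2 ^ R) : R ∉ binSet m := by
  simp [mem_binSet, Nat.testBit_lt_two_pow h]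

lemma aOdd_add {R m : ℕ} (h : m < 2 ^ R) : aOdd (2 ^ R + m) = 2 ^ R * aOdd m := by
  rw [aOdd, aOdd, binSet_add h, Finset.sum_insert (not_mem_binSet_of_lt h), pow_add]

lemma sum_dvd_aOdd {m : ℕ} {S : Finset ℕ} (h : S ⊆ binSet m) :
    2 ^ (∑ i ∈ S, i) ∣ aOdd m :=
  pow_dvd_pow 2 (Finset.sum_le_sum_of_subset h)

lemma single_dvd_aOdd {m k : ℕ} (hk : k ∈ binSet m) : 2 ^ k ∣ aOdd m := by
  have := sum_dvd_aOdd (m := m) (S := {k}) (by simpa using hk)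
  simpa using this

lemma pair_dvd_aOdd {m k : ℕ} (hk : k ∈ binSet m) (hk1 : k - 1 ∈ binSet m) (h1 : 1 ≤ k) :
    2 ^ k * 2 ^ (k - 1) ∣ aOdd m := by
  have hsub : ({k - 1, k} : Finset ℕ) ⊆ binSet m := by
    intro i hi
    simp only [Finset.mem_insert, Finset.mem_singleton] at hi
    rcases hi with rfl | rfl <;> assumption
  have := sum_dvd_aOdd hsub
  rw [Finset.sum_pair (by omega)] at this
  rwa [← pow_add, Nat.add_comm]

/-- If `a₂` satisfies the recursion of Theorem 1.1, then for every `n ≥ 1`,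
`a₂(n) = Σ_{k ∈ bin'(n)} T_{k-1}(b_{k-1}+2)·a(n) / (2^k · T_{k-1}(b_{k-1}))`,
where all the divisions are exact. -/
theorem stmt_11 (a₂ : ℕ → ℕ)
    (h0 : a₂ 0 = 0) (h1 : a₂ 1 = 0)
    (hrec1 : ∀ R m, 1 ≤ R → m < 2 ^ (R - 1) →
      a₂ (2 ^ R + m) = 2 ^ R * a₂ m + Nat.choose (2 ^ (R - 1)) 2 * aOdd m)
    (hrec2 : ∀ R m, 1 ≤ R → 2 ^ (R - 1) ≤ m → m < 2 ^ R →
      a₂ (2 ^ R + m) =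
        2 ^ R * a₂ m + (Nat.choose (2 ^ (R - 1)) 3 + 2 ^ (R - 1)) * aOdd m / 2 ^ (R - 1))
    (n : ℕ) (hn : 1 ≤ n) :
    a₂ n = ∑ k ∈ (binSet n).erase 0,
      T (k - 1) (bit n (k - 1) + 2) * aOdd n / (2 ^ k * T (k - 1) (bit n (k - 1))) := by
  induction n using Nat.strong_induction_on with
  | _ n IH =>
  rcases Nat.lt_or_ge n 2 with hsmall | h2
  · have hn1 : n = 1 := by omega
    subst hn1
    have hb : binSet 1 = {0} := by
      ext i
      simp only [mem_binSet, Finset.mem_singleton, Nat.testBit_one_eq_true_iff_self_eq_zero]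
    rw [hb]
    simpa using h1
  · set R := Nat.log 2 n with hRdef
    have hn0 : n ≠ 0 := by omega
    have hpow_le : 2 ^ R ≤ n := Nat.pow_log_le_self 2 hn0
    have hlt : n < 2 ^ (R + 1) := Nat.lt_pow_succ_log_self (by norm_num) n
    have hR1 : 1 ≤ R := by
      have h21 : 2 ^ 1 ≤ n := by omega
      exact (Nat.le_log_iff_pow_le (by norm_num) hn0).mpr h21
    set m := n - 2 ^ R with hmdef
    have hnm : n = 2 ^ R + m := by omega
    have hmR : m < 2 ^ R := by rw [pow_succ] at hlt; omega
    have hbs : binSet n = insert R (binSet m) := by rw [hnm]; exact binSet_add hmR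
    have haOdd : aOdd n = 2 ^ R * aOdd m := by rw [hnm]; exact aOdd_add hmR
    have hRner : R ∉ (binSet m).erase 0 :=
      fun h => not_mem_binSet_of_lt hmR (Finset.mem_of_mem_erase h)
    have herase : (binSet n).erase 0 = insert R ((binSet m).erase 0) := by
      rw [hbs, Finset.erase_insert_of_ne (by omega)]
    rw [herase, Finset.sum_insert hRner]
    have hbit : ∀ j, j < R → bit n j = bit m j := by
      intro j hj
      rw [hnm, bit, bit, Nat.testBit_two_pow_add_gt hj]
    have hterm : ∀ k ∈ (binSet m).erase 0,
        T (k-1) (bit n (k-1) + 2) * aOdd n / (2 ^ k * T (k-1) (bit n (k-1)))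
        = 2 ^ R * (T (k-1) (bit m (k-1) + 2) * aOdd m / (2 ^ k * T (k-1) (bit m (k-1)))) := by
      intro k hk
      have hk0 : k ≠ 0 := Finset.ne_of_mem_erase hk
      have hkm : k ∈ binSet m := Finset.mem_of_mem_erase hk
      have hkR : k < R := by
        have h1' := Nat.ge_two_pow_of_testBit (mem_binSet.mp hkm)
        have h2' : 2 ^ k < 2 ^ R := by omega
        exact (Nat.pow_lt_pow_iff_right (by norm_num : 1 < 2)).mp h2'
      have hdvd : 2 ^ k * T (k-1) (bit m (k-1)) ∣ aOdd m := by
        by_cases hb : m.testBit (k-1)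
        · have hbit1 : bit m (k-1) = 1 := by simp [bit, hb]
          rw [hbit1]
          simp only [T, if_neg one_ne_zero, if_pos rfl]
          exact pair_dvd_aOdd hkm (mem_binSet.mpr hb) (by omega)
        · have hbit0 : bit m (k-1) = 0 := by simp [bit, hb]
          rw [hbit0]
          have hT0 : T (k-1) 0 = 1 := by simp [T]
          rw [hT0, mul_one]
          exact single_dvd_aOdd hkm
      rw [hbit (k-1) (by omega), haOdd,
        mul_left_comm (T (k-1) (bit m (k-1) + 2)) (2 ^ R) (aOdd m),
        Nat.mul_div_assoc (2 ^ R) (Dvd.dvd.mul_left hdvd _)]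
    rw [Finset.sum_congr rfl hterm, ← Finset.mul_sum]
    -- now handle the head term and the recursion
    rcases Nat.eq_zero_or_pos m with hm0 | hm1
    · have hb0 : bit n (R-1) = 0 := by
        rw [hbit (R-1) (by omega), hm0]; simp [bit]
      have haOddn : aOdd n = 2 ^ R := by rw [haOdd, hm0, aOdd_zero, mul_one]
      have hT0 : T (R-1) 0 = 1 := by simp [T]
      have hT2 : T (R-1) 2 = Nat.choose (2 ^ (R-1)) 2 := by simp [T]
      rw [hm0, binSet_zero, Finset.erase_empty, Finset.sum_empty, Nat.mul_zero, Nat.add_zero,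
        hb0, haOddn, hT0, hT2, mul_one,
        Nat.mul_div_cancel _ (Nat.pow_pos (by norm_num))]
      rw [hnm, hm0, hrec1 R 0 hR1 (Nat.pow_pos (by norm_num)), h0, aOdd_zero]
      simp
    · have hmn : m < n := by omega
      have hIH := IH m hmn hm1
      rcases Nat.lt_or_ge m (2 ^ (R-1)) with hcase | hcase
      · -- bit is 0
        have hb0 : bit n (R-1) = 0 := by
          rw [hbit (R-1) (by omega)]
          simp [bit, Nat.testBit_lt_two_pow hcase]
        rw [hb0, hnm, hrec1 R m hR1 hcase, hIH]
        simp only [T, if_pos rfl, mul_one]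
        norm_num
        rw [aOdd_add hmR,
          mul_left_comm (Nat.choose (2 ^ (R-1)) 2) (2 ^ R) (aOdd m),
          Nat.mul_div_cancel_left _ (Nat.pow_pos (by norm_num))]
        ring
      · -- bit is 1
        have htb : m.testBit (R-1) = true := by
          apply testBit_of_le_of_lt hcase
          have : R - 1 + 1 = R := by omega
          rw [this]; exact hmR
        have hb1 : bit n (R-1) = 1 := by
          rw [hbit (R-1) (by omega)]
          simp [bit, htb]
        rw [hb1, hnm, hrec2 R m hR1 hcase hmR, hIH]
        simp only [T]
        norm_num
        rw [aOdd_add hmR,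
          mul_left_comm (Nat.choose (2 ^ (R-1)) 3 + 2 ^ (R-1)) (2 ^ R) (aOdd m),
          Nat.mul_div_mul_left _ _ (Nat.pow_pos (by norm_num : 0 < 2))]
        ring
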